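/- The probability vector (3/11, 1/11, 1/11, 1/11, 1/11, 1/11, 1/11, 1/11, 1/11) satisfies L₁(λ) ≥ 0 and L₂(λ) ≥ 0 with det L₁(λ) = det L₂(λ) = 0, where L₁, L₂ are the two-qutrit absolute-PPT matrices. -/

import Mathlib

/-- The Hildebrand matrix `L₁` built from a vector `λ ∈ ℝ⁹` (indices `0,…,8`
correspond to `λ₁,…,λ₉`). -/
def L1 (x : Fin 9 → ℝ) : Matrix (Fin 3) (Fin 3) ℝ :=
  !![2 * x 8, x 7 - x 0, x 5 - x 1;
     x 7 - x 0, 2 * x 6, x 4 - x 2;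
     x 5 - x 1, x 4 - x 2, 2 * x 3]

/-- The Hildebrand matrix `L₂` built from a vector `λ ∈ ℝ⁹`. -/
def L2 (x : Fin 9 → ℝ) : Matrix (Fin 3) (Fin 3) ℝ :=
  !![2 * x 8, x 7 - x 0, x 6 - x 1;
     x 7 - x 0, 2 * x 5, x 4 - x 2;
     x 6 - x 1, x 4 - x 2, 2 * x 3]

lemma auxPSD : (!![(2:ℝ)/11, -2/11, 0; -2/11, 2/11, 0; 0, 0, 2/11]).PosSemidef := by
  refine Matrix.PosSemidef.of_dotProduct_mulVec_nonneg ?_ ?_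
  · ext i j
    fin_cases i <;> fin_cases j <;>
      simp [Matrix.conjTranspose, Matrix.transpose_apply, Matrix.vecHead, Matrix.vecTail]
  · intro y
    simp only [Matrix.mulVec, dotProduct, Fin.sum_univ_three]
    simp only [Matrix.of_apply, Matrix.cons_val]
    norm_num [Matrix.cons_val_zero, Matrix.cons_val_one]
    nlinarith [sq_nonneg (y 0 - y 1), sq_nonneg (y 2)]

lemma hv5 : (![3/11, 1/11, 1/11, 1/11, 1/11, 1/11, 1/11, 1/11, 1/11] : Fin 9 → ℝ) 5 = 1/11 := rfl
lemma hv6 : (![3/11, 1/11, 1/11, 1/11, 1/11, 1/11, 1/11, 1/11, 1/11] : Fin 9 → ℝ) 6 = 1/11 := rfl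
lemma hv7 : (![3/11, 1/11, 1/11, 1/11, 1/11, 1/11, 1/11, 1/11, 1/11] : Fin 9 → ℝ) 7 = 1/11 := rfl
lemma hv8 : (![3/11, 1/11, 1/11, 1/11, 1/11, 1/11, 1/11, 1/11, 1/11] : Fin 9 → ℝ) 8 = 1/11 := rfl

lemma hL1 : L1 ![3/11, 1/11, 1/11, 1/11, 1/11, 1/11, 1/11, 1/11, 1/11] =
    !![(2:ℝ)/11, -2/11, 0; -2/11, 2/11, 0; 0, 0, 2/11] := by
  ext i j
  fin_cases i <;> fin_cases j <;> simp only [L1, Matrix.cons_val] <;> norm_num [L1, hv5, hv6, hv7, hv8]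

lemma hL2 : L2 ![3/11, 1/11, 1/11, 1/11, 1/11, 1/11, 1/11, 1/11, 1/11] =
    !![(2:ℝ)/11, -2/11, 0; -2/11, 2/11, 0; 0, 0, 2/11] := by
  ext i j
  fin_cases i <;> fin_cases j <;> simp only [L2, Matrix.cons_val] <;> norm_num [L2, hv5, hv6, hv7, hv8]

/-- The probability vector `(3/11, 1/11, …, 1/11)` satisfies `L₁(λ) ⪰ 0` and
`L₂(λ) ⪰ 0` with `det L₁(λ) = det L₂(λ) = 0`. -/
theorem zeta1_boundary_absPPT :
    (L1 ![3/11, 1/11, 1/11, 1/11, 1/11, 1/11, 1/11, 1/11, 1/11]).PosSemidef ∧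
    (L2 ![3/11, 1/11, 1/11, 1/11, 1/11, 1/11, 1/11, 1/11, 1/11]).PosSemidef ∧
    (L1 ![3/11, 1/11, 1/11, 1/11, 1/11, 1/11, 1/11, 1/11, 1/11]).det = 0 ∧
    (L2 ![3/11, 1/11, 1/11, 1/11, 1/11, 1/11, 1/11, 1/11, 1/11]).det = 0 := by
  refine ⟨hL1 ▸ auxPSD, hL2 ▸ auxPSD, ?_, ?_⟩
  · rw [hL1, Matrix.det_fin_three]; simp only [Matrix.of_apply, Matrix.cons_val]; norm_num
  · rw [hL2, Matrix.det_fin_three]; simp only [Matrix.of_apply, Matrix.cons_val]; norm_num
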